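/- In the two-parameter quantum algebra U_{v,t}, the antipode satisfies S(x⁺) = (−1)^{tr|x|} v^{|x|·|x|/2} v_{|x|}^{−1} K_{|x|}^{−1} σ(x)⁺ for every homogeneous x ∈ f, where σ is the twisted anti-involution. -/

import Mathlib

noncomputable section

def wdeg {I : Type*} [DecidableEq I] (w : FreeMonoid I) : I →₀ ℕ :=
  (w.toList.map fun i => Finsupp.single i 1).sum

def angN {I : Type*} (form : I → I → ℤ) (ν μ : I →₀ ℕ) : ℤ :=
  ν.sum fun i a => μ.sum fun j b => (a : ℤ) * (b : ℤ) * form i j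

def dotN {I : Type*} (form : I → I → ℤ) (ν μ : I →₀ ℕ) : ℤ :=
  angN form ν μ + angN form μ ν

abbrev FreeAlg (K : Type*) [Field K] (I : Type*) : Type _ :=
  MonoidAlgebra K (FreeMonoid I)

def theta {K : Type*} [Field K] {I : Type*} (i : I) : FreeAlg K I :=
  MonoidAlgebra.of K (FreeMonoid I) (FreeMonoid.of i)

def IsHomog {K : Type*} [Field K] {I : Type*} [DecidableEq I]
    (x : FreeAlg K I) (ν : I →₀ ℕ) : Prop :=
  ∀ w ∈ x.coeff.support, wdeg w = ν

/-- `tr ν = Σ ν_i`. -/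
def trN {I : Type*} (ν : I →₀ ℕ) : ℕ := ν.sum fun _ a => a

/-- The exponent such that `v_ν = v^(vexp ν)`, where `v_i = v^{d_i}` with `2d_i = i·i`. -/
def vexp {I : Type*} (dh : I → ℤ) (ν : I →₀ ℕ) : ℤ := ν.sum fun i a => (a : ℤ) * dh i

/-- `K_ν = Π K_i^{ν_i}` as a unit. -/
def Kpow {U : Type*} [Ring U] {I : Type*} [Fintype I] (Kk : I → Uˣ) (ν : I →₀ ℕ) : Uˣ :=
  (Finset.univ.toList.map fun i => Kk i ^ ν i).prod

/-! ### Auxiliary lemmas -/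

section aux

variable {I : Type*} (form : I → I → ℤ)

lemma angN_zero_left (μ : I →₀ ℕ) : angN form 0 μ = 0 := by simp [angN]

lemma angN_zero_right (ν : I →₀ ℕ) : angN form ν 0 = 0 := by simp [angN]

lemma angN_add_left (ν₁ ν₂ μ : I →₀ ℕ) :
    angN form (ν₁ + ν₂) μ = angN form ν₁ μ + angN form ν₂ μ := by
  unfold angN
  rw [Finsupp.sum_add_index' (by simp) ?_]
  intro i b₁ b₂
  rw [← Finsupp.sum_add]
  congr 1; ext j c; push_cast; ring

lemma angN_add_right (ν μ₁ μ₂ : I →₀ ℕ) :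
    angN form ν (μ₁ + μ₂) = angN form ν μ₁ + angN form ν μ₂ := by
  unfold angN
  rw [← Finsupp.sum_add]
  congr 1; ext i a
  rw [Finsupp.sum_add_index' (by simp) ?_]
  intro j c₁ c₂; push_cast; ring

lemma angN_single_single (i j : I) :
    angN form (Finsupp.single i 1) (Finsupp.single j 1) = form i j := by
  unfold angN
  rw [Finsupp.sum_single_index (by simp), Finsupp.sum_single_index (by simp)]
  simp

lemma trN_zero : trN (0 : I →₀ ℕ) = 0 := by simp [trN]

lemma trN_add (ν μ : I →₀ ℕ) : trN (ν + μ) = trN ν + trN μ := by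
  unfold trN
  exact Finsupp.sum_add_index' (fun _ => rfl) (fun _ _ _ => rfl)

lemma trN_single (i : I) : trN (Finsupp.single i 1) = 1 := by
  unfold trN
  rw [Finsupp.sum_single_index rfl]

variable (dh : I → ℤ)

lemma vexp_zero : vexp dh (0 : I →₀ ℕ) = 0 := by simp [vexp]

lemma vexp_add (ν μ : I →₀ ℕ) : vexp dh (ν + μ) = vexp dh ν + vexp dh μ := by
  unfold vexp
  exact Finsupp.sum_add_index' (by simp) (fun i b₁ b₂ => by push_cast; ring)

lemma vexp_single (i : I) : vexp dh (Finsupp.single i 1) = dh i := by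
  unfold vexp
  rw [Finsupp.sum_single_index (by simp)]
  simp

end aux

lemma listProdMapMul {M ι : Type*} [Monoid M] (l : List ι) (f g : ι → M)
    (h : ∀ a b, Commute (g a) (f b)) :
    (l.map fun a => f a * g a).prod = (l.map f).prod * (l.map g).prod := by
  induction l with
  | nil => simp
  | cons a l ih =>
    simp only [List.map_cons, List.prod_cons, ih]
    have hc : Commute (g a) (l.map f).prod := by
      refine Commute.list_prod_right _ _ ?_
      intro x hx
      rcases List.mem_map.mp hx with ⟨b, _, rfl⟩
      exact h a b
    rw [mul_assoc, ← mul_assoc (g a), hc.eq, mul_assoc, ← mul_assoc, ← mul_assoc]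

lemma Kpow_zero {U : Type*} [Ring U] {I : Type*} [Fintype I] (Kk : I → Uˣ) :
    Kpow Kk 0 = 1 := by simp [Kpow]

lemma Kpow_single_add {U : Type*} [Ring U] {I : Type*} [Fintype I] [DecidableEq I]
    (Kk : I → Uˣ) (hKcomm : ∀ i j, Kk i * Kk j = Kk j * Kk i) (i : I) (μ : I →₀ ℕ) :
    Kpow Kk (Finsupp.single i 1 + μ) = Kk i * Kpow Kk μ := by
  unfold Kpow
  have h1 : (fun j => Kk j ^ ((Finsupp.single i 1 + μ : I →₀ ℕ) j))
      = fun j => Kk j ^ ((Finsupp.single i 1 : I →₀ ℕ) j) * Kk j ^ μ j := by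
    funext j; rw [Finsupp.add_apply, pow_add]
  rw [h1, listProdMapMul _ _ _ (fun a b => Commute.pow_pow (hKcomm a b) _ _)]
  congr 1
  rw [List.prod_map_eq_pow_single i _ ?_]
  · have hc : List.count i Finset.univ.toList = 1 :=
      List.count_eq_one_of_mem (Finset.nodup_toList _) (by simp)
    simp [hc]
  · intro a' ha' _
    rw [Finsupp.single_eq_of_ne' (Ne.symm ha'), pow_zero]

/-- Local notation for the monomial corresponding to a word. -/
def mono (K : Type*) [Field K] {I : Type*} (w : FreeMonoid I) : FreeAlg K I :=
  MonoidAlgebra.of K (FreeMonoid I) w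

section mono

variable (K : Type*) [Field K] {I : Type*} [DecidableEq I]

lemma mono_nil : mono K (FreeMonoid.ofList ([] : List I)) = 1 := by
  unfold mono
  exact map_one _

lemma mono_cons (i : I) (l : List I) :
    mono K (FreeMonoid.ofList (i :: l)) = theta i * mono K (FreeMonoid.ofList l) := by
  unfold mono
  rw [FreeMonoid.ofList_cons, map_mul]
  rfl

lemma wdeg_nil : wdeg (FreeMonoid.ofList ([] : List I)) = 0 := by
  simp [wdeg]

lemma wdeg_cons (i : I) (l : List I) :
    wdeg (FreeMonoid.ofList (i :: l)) =
      Finsupp.single i 1 + wdeg (FreeMonoid.ofList l) := by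
  simp [wdeg, FreeMonoid.toList_ofList]

lemma wdeg_reverse (l : List I) :
    wdeg (FreeMonoid.ofList l.reverse) = wdeg (FreeMonoid.ofList l) := by
  simp [wdeg, FreeMonoid.toList_ofList, List.map_reverse, List.sum_reverse]

lemma mono_homog (w : FreeMonoid I) : IsHomog (mono K w) (wdeg w) := by
  intro w' hw'
  have hsupp : (mono K w).coeff.support = {w} := by
    unfold mono
    rw [MonoidAlgebra.of_apply, MonoidAlgebra.coeff_single]
    exact Finsupp.support_single_ne_zero _ one_ne_zero
  rw [hsupp, Finset.mem_singleton] at hw'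
  subst hw'
  rfl

lemma theta_homog (i : I) : IsHomog (theta i : FreeAlg K I) (Finsupp.single i 1) := by
  have h : (theta i : FreeAlg K I) = mono K (FreeMonoid.ofList [i]) := rfl
  rw [h]
  have h2 : wdeg (FreeMonoid.ofList [i]) = Finsupp.single i 1 := by
    simp [wdeg, FreeMonoid.toList_ofList]
  rw [← h2]
  exact mono_homog K _

end mono

/-- in `U_{v,t}`, the antipode satisfies
`S(x⁺) = (−1)^{tr|x|} v^{|x|·|x|/2} v_{|x|}^{−1} K_{|x|}^{−1} σ(x)⁺` for homogeneous `x ∈ f`. -/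
theorem antipode_plus {I : Type*} [Fintype I] [DecidableEq I] {K : Type*} [Field K]
    (v t : Kˣ) (form : I → I → ℤ)
    (dh : I → ℤ) (hdh : ∀ i, 2 * dh i = dotN form (Finsupp.single i 1) (Finsupp.single i 1))
    {U : Type*} [Ring U] [Algebra K U]
    (E : I → U) (Kk : I → Uˣ)
    (hKcomm : ∀ i j, Kk i * Kk j = Kk j * Kk i)
    (hKE : ∀ i j, (Kk i : U) * E j =
      ((v ^ dotN form (Finsupp.single i 1) (Finsupp.single j 1) *
        t ^ (angN form (Finsupp.single j 1) (Finsupp.single i 1) -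
             angN form (Finsupp.single i 1) (Finsupp.single j 1)) : Kˣ) : K) •
        (E j * (Kk i : U)))
    (plus : FreeAlg K I →ₐ[K] U)
    (hplusθ : ∀ i, plus (theta i) = E i)
    (σ : FreeAlg K I →ₗ[K] FreeAlg K I)
    (hσone : σ 1 = 1)
    (hσtheta : ∀ i : I, σ (theta i) = theta i)
    (hσmul : ∀ (x y : FreeAlg K I) (ν μ : I →₀ ℕ), IsHomog x ν → IsHomog y μ →
      σ (x * y) = ((t ^ (angN form μ ν - angN form ν μ) : Kˣ) : K) • (σ y * σ x))
    (S : U →ₗ[K] U)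
    (hS1 : S 1 = 1)
    (hSmul : ∀ a b : U, S (a * b) = S b * S a)
    (hSE : ∀ i, S (E i) = -((((Kk i)⁻¹ : Uˣ) : U) * E i)) :
    ∀ (x : FreeAlg K I) (ν : I →₀ ℕ), IsHomog x ν → ∀ e : ℤ, 2 * e = dotN form ν ν →
      S (plus x) =
        (((-1 : K) ^ trN ν) * ((v ^ (e - vexp dh ν) : Kˣ) : K)) •
          (((((Kpow Kk ν)⁻¹ : Uˣ) : U)) * plus (σ x)) := by
  classical
  intro x ν hx e he
  -- the exponent is determined
  have he' : e = angN form ν ν := by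
    have h2 : dotN form ν ν = angN form ν ν + angN form ν ν := rfl
    omega
  subst he'
  clear he
  have hform : ∀ i, dh i = form i i := by
    intro i
    have h := hdh i
    rw [dotN, angN_single_single] at h
    omega
  -- explicit form of σ on monomials
  have hσmono : ∀ w : List I, ∃ s : ℤ,
      σ (mono K (FreeMonoid.ofList w)) =
        ((t ^ s : Kˣ) : K) • mono K (FreeMonoid.ofList w.reverse) := by
    intro w
    induction w with
    | nil =>
      refine ⟨0, ?_⟩
      have h1 : mono K (FreeMonoid.ofList ([] : List I)) = 1 := mono_nil K
      rw [List.reverse_nil, h1, hσone]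
      simp
    | cons i l ih =>
      obtain ⟨s, hs⟩ := ih
      refine ⟨(angN form (wdeg (FreeMonoid.ofList l)) (Finsupp.single i 1) -
        angN form (Finsupp.single i 1) (wdeg (FreeMonoid.ofList l))) + s, ?_⟩
      rw [mono_cons, hσmul (theta i) _ (Finsupp.single i 1) (wdeg (FreeMonoid.ofList l))
        (theta_homog K i) (mono_homog K _), hs, hσtheta]
      rw [smul_mul_assoc, smul_smul]
      have hm : mono K (FreeMonoid.ofList l.reverse) * theta i
          = mono K (FreeMonoid.ofList (i :: l).reverse) := by
        rw [List.reverse_cons, FreeMonoid.ofList_append]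
        unfold mono theta
        rw [map_mul]
        rfl
      rw [hm]
      congr 1
      rw [← Units.val_mul, ← zpow_add]
  -- commutation of K with monomials
  have kcm : ∀ (w : List I) (j : I),
      (Kk j : U) * plus (mono K (FreeMonoid.ofList w)) =
      ((v ^ dotN form (Finsupp.single j 1) (wdeg (FreeMonoid.ofList w)) *
        t ^ (angN form (wdeg (FreeMonoid.ofList w)) (Finsupp.single j 1) -
             angN form (Finsupp.single j 1) (wdeg (FreeMonoid.ofList w))) : Kˣ) : K) •
      (plus (mono K (FreeMonoid.ofList w)) * Kk j) := by
    intro w j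
    induction w with
    | nil =>
      rw [mono_nil, wdeg_nil]
      simp [angN_zero_left, angN_zero_right, dotN]
    | cons i l ih =>
      rw [mono_cons, map_mul, hplusθ, ← mul_assoc, hKE j i, smul_mul_assoc, mul_assoc, ih,
        mul_smul_comm, smul_smul, wdeg_cons]
      congr 1
      · rw [← Units.val_mul]
        congr 1
        apply Units.ext
        simp only [dotN, angN_add_left, angN_add_right, Units.val_mul]
        push_cast
        simp only [zpow_add₀ v.ne_zero, zpow_sub₀ v.ne_zero, zpow_neg,
          zpow_add₀ t.ne_zero, zpow_sub₀ t.ne_zero]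
        ring
      · rw [mul_assoc]
  -- the main formula for monomials
  have main : ∀ w : List I,
      S (plus (mono K (FreeMonoid.ofList w))) =
        (((-1 : K) ^ trN (wdeg (FreeMonoid.ofList w))) *
          ((v ^ (angN form (wdeg (FreeMonoid.ofList w)) (wdeg (FreeMonoid.ofList w)) -
            vexp dh (wdeg (FreeMonoid.ofList w))) : Kˣ) : K)) •
        (((((Kpow Kk (wdeg (FreeMonoid.ofList w)))⁻¹ : Uˣ) : U)) *
          plus (σ (mono K (FreeMonoid.ofList w)))) := by
    intro w
    induction w with
    | nil =>
      rw [mono_nil, wdeg_nil, hσone]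
      simp [trN_zero, angN_zero_left, vexp_zero, Kpow_zero, hS1]
    | cons i l ih =>
      set μ : I →₀ ℕ := wdeg (FreeMonoid.ofList l) with hμ
      have hwd : wdeg (FreeMonoid.ofList (i :: l)) = Finsupp.single i 1 + μ := wdeg_cons i l
      have hplusm : plus (mono K (FreeMonoid.ofList (i :: l)))
          = E i * plus (mono K (FreeMonoid.ofList l)) := by
        rw [mono_cons, map_mul, hplusθ]
      have hσc : σ (mono K (FreeMonoid.ofList (i :: l)))
          = ((t ^ (angN form μ (Finsupp.single i 1) - angN form (Finsupp.single i 1) μ) : Kˣ) : K) •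
            (σ (mono K (FreeMonoid.ofList l)) * theta i) := by
        rw [mono_cons, hσmul (theta i) _ (Finsupp.single i 1) μ (theta_homog K i) (mono_homog K _),
          hσtheta]
      have hplusσc : plus (σ (mono K (FreeMonoid.ofList (i :: l))))
          = ((t ^ (angN form μ (Finsupp.single i 1) - angN form (Finsupp.single i 1) μ) : Kˣ) : K) •
            (plus (σ (mono K (FreeMonoid.ofList l))) * E i) := by
        rw [hσc, map_smul, map_mul, hplusθ]
      obtain ⟨s, hs⟩ := hσmono l
      set W : U := plus (σ (mono K (FreeMonoid.ofList l))) with hW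
      set Q : U := plus (mono K (FreeMonoid.ofList l.reverse)) with hQ
      have hWQ : W = ((t ^ s : Kˣ) : K) • Q := by rw [hW, hs, map_smul, hQ]
      set cu : K := ((v ^ dotN form (Finsupp.single i 1) μ *
        t ^ (angN form μ (Finsupp.single i 1) - angN form (Finsupp.single i 1) μ) : Kˣ) : K)
        with hcu
      have hKQ : (Kk i : U) * Q = cu • (Q * Kk i) := by
        have h0 := kcm l.reverse i
        rwa [wdeg_reverse] at h0
      have hQB : Q * (((Kk i)⁻¹ : Uˣ) : U) = cu • ((((Kk i)⁻¹ : Uˣ) : U) * Q) := by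
        calc Q * (((Kk i)⁻¹ : Uˣ) : U)
            = (((Kk i)⁻¹ : Uˣ) : U) * ((Kk i : U) * Q) * (((Kk i)⁻¹ : Uˣ) : U) := by
              rw [← mul_assoc, Units.inv_mul, one_mul]
          _ = (((Kk i)⁻¹ : Uˣ) : U) * (cu • (Q * (Kk i : U))) * (((Kk i)⁻¹ : Uˣ) : U) := by
              rw [hKQ]
          _ = cu • ((((Kk i)⁻¹ : Uˣ) : U) * Q) := by
              rw [mul_smul_comm, smul_mul_assoc, mul_assoc, mul_assoc, Units.mul_inv, mul_one]
      have hWB : W * (((Kk i)⁻¹ : Uˣ) : U) = cu • ((((Kk i)⁻¹ : Uˣ) : U) * W) := by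
        rw [hWQ, smul_mul_assoc, hQB, mul_smul_comm, smul_comm]
      have key : W * ((((Kk i)⁻¹ : Uˣ) : U) * E i)
          = cu • ((((Kk i)⁻¹ : Uˣ) : U) * (W * E i)) := by
        rw [← mul_assoc, hWB, smul_mul_assoc, mul_assoc]
      rw [hwd, hplusm, hSmul, hSE i, ih, hplusσc, Kpow_single_add Kk hKcomm i μ]
      rw [mul_neg, mul_inv_rev, Units.val_mul]
      rw [smul_mul_assoc, mul_assoc, key]
      simp only [mul_smul_comm, smul_smul, mul_assoc, ← neg_smul]
      congr 1
      have h1 : trN (Finsupp.single i 1 + μ) = 1 + trN μ := by rw [trN_add, trN_single]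
      have h2 : angN form (Finsupp.single i 1 + μ) (Finsupp.single i 1 + μ) -
          vexp dh (Finsupp.single i 1 + μ)
          = dotN form (Finsupp.single i 1) μ + (angN form μ μ - vexp dh μ) := by
        rw [angN_add_left, angN_add_right, angN_add_right, angN_single_single,
          vexp_add, vexp_single, dotN, hform i]
        ring
      rw [h1, h2, hcu]
      push_cast
      simp only [zpow_add₀ v.ne_zero, zpow_sub₀ v.ne_zero, zpow_neg,
        zpow_add₀ t.ne_zero, zpow_sub₀ t.ne_zero, pow_add, pow_one]
      ring
  -- extend by linearity
  have hxsum : x = x.coeff.sum fun w c => c • mono K w := by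
    conv_lhs => rw [← MonoidAlgebra.sum_coeff_single x]
    refine Finsupp.sum_congr ?_
    intro w _
    simp [mono, MonoidAlgebra.of_apply, MonoidAlgebra.smul_single']
  have hrhs : plus (σ x) = x.coeff.sum fun w c => c • plus (σ (mono K w)) := by
    conv_lhs => rw [hxsum]
    rw [map_finsuppSum, map_finsuppSum]
    simp only [map_smul]
  conv_lhs => rw [hxsum]
  rw [map_finsuppSum, map_finsuppSum, hrhs]
  simp only [map_smul]
  rw [Finsupp.sum, Finsupp.sum, Finset.mul_sum, Finset.smul_sum]
  refine Finset.sum_congr rfl ?_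
  intro w hw
  have hm := main w.toList
  rw [FreeMonoid.ofList_toList, hx w hw] at hm
  rw [hm, smul_smul, mul_smul_comm, smul_smul, mul_comm]

end
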